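/- Let K be an A-field and Υ a triangular t-module of dimension n over K whose diagonal Drinfeld modules ψ_1,…,ψ_n all have the same rank r (i.e. Υ is almost strictly pure). Then there exist a finite field extension L of K and a lower triangular matrix V ∈ Mat_n(L{τ}) with all diagonal entries equal to 1 such that V·Υ_t·V^{−1} is lower triangular with the same diagonal entries, has τ-degree r, and its leading coefficient matrix (the entrywise matrix of coefficients of τ^r) is invertible; that is, Υ becomes isomorphic over L to a strictly pure t-module. -/

import Mathlib

open Polynomial Matrix Finset

noncomputable section

/-- Twisted ("skew") multiplication of polynomials in `τ`, determined by the rule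
`τ · c = c^q · τ`:  `(Σᵢ aᵢτ^i) · (Σⱼ bⱼτ^j) = Σ_{i,j} aᵢ bⱼ^(q^i) τ^(i+j)`. -/
def twMul {K : Type*} [Field K] (q : ℕ) (f g : Polynomial K) : Polynomial K :=
  f.sum fun i a => g.sum fun j b => Polynomial.C (a * b ^ q ^ i) * Polynomial.X ^ (i + j)

/-- Twisted multiplication of matrices over the twisted polynomial ring `K{τ}`. -/
def twMatMul {K : Type*} [Field K] (q : ℕ) {α β γ : Type*} [Fintype β]
    (A : Matrix α β (Polynomial K)) (B : Matrix β γ (Polynomial K)) :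
    Matrix α γ (Polynomial K) :=
  Matrix.of fun i k => ∑ j, twMul q (A i j) (B j k)

/-- `ψ` is (the value at `t` of) a Drinfeld module of rank `r` over the `A`-field `(K, θ)`. -/
def IsDrinfeld {K : Type*} [Field K] (θ : K) (r : ℕ) (ψ : Polynomial K) : Prop :=
  1 ≤ r ∧ ψ.coeff 0 = θ ∧ ψ.natDegree = r ∧ ψ.coeff r ≠ 0

/-- `Υ` is (the value at `t` of) a triangular t-module of dimension `n` with diagonal
Drinfeld modules `ψ 0 = ψ₁, …, ψ (n-1) = ψₙ` of ranks `r 0, …, r (n-1)`:  `Υ` is lower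
triangular and its `(k,k)` diagonal entry is `ψ k.rev` (so `ψₙ` is top-left and
`ψ₁` is bottom-right). -/
def IsTriangular {K : Type*} [Field K] (θ : K) {n : ℕ}
    (Υ : Matrix (Fin n) (Fin n) (Polynomial K))
    (ψ : Fin n → Polynomial K) (r : Fin n → ℕ) : Prop :=
  (∀ i j : Fin n, i < j → Υ i j = 0) ∧
  (∀ k : Fin n, Υ k k = ψ k.rev) ∧
  (∀ i : Fin n, IsDrinfeld θ (r i) (ψ i))

section Scalar

variable {F : Type*} [Field F] {q : ℕ}

lemma twMul_zero_left (g : Polynomial F) : twMul q 0 g = 0 := by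
  simp [twMul, Polynomial.sum_def]

lemma twMul_zero_right (f : Polynomial F) : twMul q f 0 = 0 := by
  simp [twMul, Polynomial.sum_def]

lemma monomial_twMul_monomial (hq0 : q ≠ 0) (i j : ℕ) (a b : F) :
    twMul q (monomial i a) (monomial j b) = monomial (i + j) (a * b ^ q ^ i) := by
  unfold twMul
  rw [Polynomial.sum_monomial_index _ _ (by simp)]
  rw [Polynomial.sum_monomial_index _ _ (by simp [zero_pow (pow_ne_zero i hq0)])]
  rw [C_mul_X_pow_eq_monomial]

lemma add_twMul (f₁ f₂ g : Polynomial F) :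
    twMul q (f₁ + f₂) g = twMul q f₁ g + twMul q f₂ g := by
  unfold twMul
  rw [Polynomial.sum_add_index]
  · intro i; simp [Polynomial.sum_def]
  · intro i b₁ b₂
    rw [← Polynomial.sum_add]
    congr 1; funext j b
    rw [add_mul, C_add, add_mul]

variable {p s : ℕ} [Fact p.Prime] [CharP F p]

lemma pow_q_add {x y : F} (i : ℕ) : (x + y) ^ (p ^ s) ^ i = x ^ (p ^ s) ^ i + y ^ (p ^ s) ^ i := by
  rw [← pow_mul]
  exact add_pow_char_pow x y p (s * i)

lemma twMul_add (f g₁ g₂ : Polynomial F) :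
    twMul (p ^ s) f (g₁ + g₂) = twMul (p ^ s) f g₁ + twMul (p ^ s) f g₂ := by
  unfold twMul
  rw [← Polynomial.sum_add]
  congr 1; funext i a
  rw [Polynomial.sum_add_index]
  · intro j
    have hq0 : (p : ℕ) ^ s ≠ 0 := pow_ne_zero s (Fact.out (p := p.Prime)).ne_zero
    simp [zero_pow (pow_ne_zero i hq0)]
  · intro j b₁ b₂
    rw [pow_q_add, mul_add, C_add, add_mul]

lemma twMul_neg (f g : Polynomial F) : twMul (p ^ s) f (-g) = -(twMul (p ^ s) f g) := by
  have h := twMul_add (p := p) (s := s) f g (-g)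
  rw [add_neg_cancel, twMul_zero_right] at h
  exact eq_neg_of_add_eq_zero_right h.symm

lemma twMul_sum {ι : Type*} (t : Finset ι) (f : Polynomial F) (g : ι → Polynomial F) :
    twMul (p ^ s) f (∑ x ∈ t, g x) = ∑ x ∈ t, twMul (p ^ s) f (g x) := by
  classical
  induction t using Finset.induction_on with
  | empty => simp [twMul_zero_right]
  | insert _ _ h ih => rw [Finset.sum_insert h, Finset.sum_insert h, twMul_add, ih]

lemma sum_twMul {ι : Type*} (t : Finset ι) (f : ι → Polynomial F) (g : Polynomial F) :
    twMul q (∑ x ∈ t, f x) g = ∑ x ∈ t, twMul q (f x) g := by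
  classical
  induction t using Finset.induction_on with
  | empty => simp [twMul_zero_left]
  | insert _ _ h ih => rw [Finset.sum_insert h, Finset.sum_insert h, add_twMul, ih]

lemma twMul_assoc    (f g h : Polynomial F) :
    twMul (p ^ s) (twMul (p ^ s) f g) h = twMul (p ^ s) f (twMul (p ^ s) g h) := by
  have hq0 : (p : ℕ) ^ s ≠ 0 := pow_ne_zero s (Fact.out (p := p.Prime)).ne_zero
  induction f using Polynomial.induction_on' with
  | add f₁ f₂ ih₁ ih₂ => rw [add_twMul, add_twMul, add_twMul, ih₁, ih₂]
  | monomial i a =>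
    induction g using Polynomial.induction_on' with
    | add g₁ g₂ ih₁ ih₂ =>
      rw [twMul_add, add_twMul, add_twMul, twMul_add, ih₁, ih₂]
    | monomial j b =>
      induction h using Polynomial.induction_on' with
      | add h₁ h₂ ih₁ ih₂ =>
        rw [twMul_add, twMul_add, twMul_add, ih₁, ih₂]
      | monomial k c =>
        rw [monomial_twMul_monomial hq0, monomial_twMul_monomial hq0,
          monomial_twMul_monomial hq0, monomial_twMul_monomial hq0]
        have hexp : ((p ^ s) ^ j) * ((p ^ s) ^ i) = (p ^ s) ^ (i + j) := by
            rw [← pow_add, Nat.add_comm]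
        have hc : (c ^ (p ^ s) ^ j) ^ (p ^ s) ^ i = c ^ (p ^ s) ^ (i + j) :=
          (pow_mul c ((p ^ s) ^ j) ((p ^ s) ^ i)).symm.trans (congrArg (c ^ ·) hexp)
        have hidx : i + j + k = i + (j + k) := add_assoc i j k
        have hco : a * b ^ (p ^ s) ^ i * c ^ (p ^ s) ^ (i + j)
            = a * (b * c ^ (p ^ s) ^ j) ^ (p ^ s) ^ i := by
          rw [mul_pow, hc, mul_assoc]
        rw [hidx, hco]

lemma twMul_one (hq0 : q ≠ 0) (f : Polynomial F) : twMul q f 1 = f := by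
  unfold twMul
  have key : ∀ i (a : F),
      ((1 : Polynomial F).sum fun j b => Polynomial.C (a * b ^ q ^ i) * X ^ (i + j)) =
        Polynomial.C a * X ^ i := by
    intro i a
    rw [show (1 : Polynomial F) = Polynomial.C 1 from rfl,
      Polynomial.sum_C_index (by simp [zero_pow (pow_ne_zero i hq0)])]
    simp
  rw [Polynomial.sum_def]
  simp_rw [key]
  simp_rw [Polynomial.C_mul_X_pow_eq_monomial]
  exact f.as_sum_support.symm

lemma one_twMul (f : Polynomial F) : twMul q 1 f = f := by
  unfold twMul
  rw [show (1 : Polynomial F) = Polynomial.C 1 from rfl,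
    Polynomial.sum_C_index (by simp [Polynomial.sum_def])]
  simp only [pow_zero, pow_one, one_mul, zero_add]
  exact Polynomial.sum_C_mul_X_pow_eq f

lemma twMul_monomial_left (m : ℕ) (c : F) (g : Polynomial F) :
    twMul q (monomial m c) g = g.sum fun j b => monomial (m + j) (c * b ^ q ^ m) := by
  unfold twMul
  rw [Polynomial.sum_monomial_index _ _ (by simp [Polynomial.sum_def])]
  congr 1; funext j b
  rw [C_mul_X_pow_eq_monomial]

lemma twMul_monomial_right (hq0 : q ≠ 0) (m : ℕ) (c : F) (g : Polynomial F) :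
    twMul q g (monomial m c) = g.sum fun i a => monomial (i + m) (a * c ^ q ^ i) := by
  unfold twMul
  congr 1; funext i a
  rw [Polynomial.sum_monomial_index _ _ (by simp [zero_pow (pow_ne_zero i hq0)]),
    C_mul_X_pow_eq_monomial]

lemma coeff_twMul_monomial_left (hq0 : q ≠ 0) (m : ℕ) (c : F) (g : Polynomial F) (k : ℕ) :
    (twMul q (monomial m c) g).coeff k =
      if m ≤ k then c * (g.coeff (k - m)) ^ q ^ m else 0 := by
  rw [twMul_monomial_left, Polynomial.coeff_sum, Polynomial.sum_def]
  simp only [Polynomial.coeff_monomial]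
  by_cases hmk : m ≤ k
  · have : ∀ j, (m + j = k) = (j = k - m) := fun j => propext (by omega)
    simp_rw [this]
    rw [Finset.sum_ite_eq' g.support (k - m) (fun j => c * (g.coeff j) ^ q ^ m)]
    simp only [hmk, if_true]
    by_cases hmem : k - m ∈ g.support
    · rw [if_pos hmem]
    · rw [if_neg hmem, Polynomial.notMem_support_iff.mp hmem,
        zero_pow (pow_ne_zero m hq0), mul_zero]
  · rw [if_neg hmk]
    apply Finset.sum_eq_zero
    intro j _
    rw [if_neg (by omega)]

lemma coeff_twMul_monomial_right (hq0 : q ≠ 0) (m : ℕ) (c : F) (g : Polynomial F) (k : ℕ) :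
    (twMul q g (monomial m c)).coeff k =
      if m ≤ k then g.coeff (k - m) * c ^ q ^ (k - m) else 0 := by
  rw [twMul_monomial_right hq0, Polynomial.coeff_sum, Polynomial.sum_def]
  simp only [Polynomial.coeff_monomial]
  by_cases hmk : m ≤ k
  · have : ∀ i, (i + m = k) = (i = k - m) := fun i => propext (by omega)
    simp_rw [this]
    rw [Finset.sum_ite_eq' g.support (k - m) (fun i => g.coeff i * c ^ q ^ i)]
    simp only [hmk, if_true]
    by_cases hmem : k - m ∈ g.support
    · rw [if_pos hmem]
    · rw [if_neg hmem, Polynomial.notMem_support_iff.mp hmem, zero_mul]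
  · rw [if_neg hmk]
    apply Finset.sum_eq_zero
    intro i _
    rw [if_neg (by omega)]

lemma natDegree_twMul_le (f g : Polynomial F) :
    (twMul q f g).natDegree ≤ f.natDegree + g.natDegree := by
  unfold twMul
  rw [Polynomial.sum_def]
  apply Polynomial.natDegree_sum_le_of_forall_le
  intro i hi
  rw [Polynomial.sum_def]
  apply Polynomial.natDegree_sum_le_of_forall_le
  intro j hj
  apply le_trans (Polynomial.natDegree_C_mul_X_pow_le _ _)
  exact Nat.add_le_add (Polynomial.le_natDegree_of_mem_supp i hi)
    (Polynomial.le_natDegree_of_mem_supp j hj)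

lemma map_twMul {F' : Type*} [Field F'] [CharP F' p] (φ : F →+* F') (f g : Polynomial F) :
    (twMul (p ^ s) f g).map φ = twMul (p ^ s) (f.map φ) (g.map φ) := by
  have hq0 : (p : ℕ) ^ s ≠ 0 := pow_ne_zero s (Fact.out (p := p.Prime)).ne_zero
  induction f using Polynomial.induction_on' with
  | add f₁ f₂ ih₁ ih₂ => rw [add_twMul, Polynomial.map_add, ih₁, ih₂, Polynomial.map_add, add_twMul]
  | monomial i a =>
    induction g using Polynomial.induction_on' with
    | add g₁ g₂ ih₁ ih₂ => rw [twMul_add, Polynomial.map_add, ih₁, ih₂, Polynomial.map_add, twMul_add]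
    | monomial j b =>
      rw [monomial_twMul_monomial hq0, Polynomial.map_monomial, Polynomial.map_monomial,
        Polynomial.map_monomial, monomial_twMul_monomial hq0]
      congr 1
      rw [φ.map_mul, φ.map_pow]

end Scalar


section Mat

variable {F : Type*} [Field F] {q : ℕ} {n : ℕ}

lemma twMatMul_apply (A B : Matrix (Fin n) (Fin n) (Polynomial F)) (i k : Fin n) :
    twMatMul q A B i k = ∑ j, twMul q (A i j) (B j k) := rfl

lemma twMatMul_one (hq0 : q ≠ 0) (A : Matrix (Fin n) (Fin n) (Polynomial F)) :
    twMatMul q A 1 = A := by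
  ext i k
  rw [twMatMul_apply, Finset.sum_eq_single k]
  · rw [Matrix.one_apply_eq, twMul_one hq0]
  · intro j _ hjk
    rw [Matrix.one_apply_ne hjk, twMul_zero_right]
  · simp

lemma one_twMatMul (A : Matrix (Fin n) (Fin n) (Polynomial F)) :
    twMatMul q 1 A = A := by
  ext i k
  rw [twMatMul_apply, Finset.sum_eq_single i]
  · rw [Matrix.one_apply_eq, one_twMul]
  · intro j _ hji
    rw [Matrix.one_apply_ne' hji, twMul_zero_left]
  · simp

lemma add_twMatMul (A B C : Matrix (Fin n) (Fin n) (Polynomial F)) :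
    twMatMul q (A + B) C = twMatMul q A C + twMatMul q B C := by
  refine Matrix.ext fun i k => ?_
  show (∑ j, twMul q ((A + B) i j) (C j k)) = _ + _
  simp only [Matrix.add_apply, add_twMul]
  rw [Finset.sum_add_distrib]
  rfl

def Estd {F : Type*} [Field F] {n : ℕ} (i j : Fin n) (e : Polynomial F) :
    Matrix (Fin n) (Fin n) (Polynomial F) :=
  Matrix.of fun a b => if a = i ∧ b = j then e else 0

lemma Estd_twMatMul (i j : Fin n) (e : Polynomial F)
    (A : Matrix (Fin n) (Fin n) (Polynomial F)) :
    twMatMul q (Estd i j e) A = Matrix.of fun a b => if a = i then twMul q e (A j b) else 0 := by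
  refine Matrix.ext fun a b => ?_
  rw [twMatMul_apply]
  show (∑ k, twMul q (if a = i ∧ k = j then e else 0) (A k b)) = _
  by_cases hai : a = i
  · rw [Finset.sum_eq_single j]
    · simp [hai]
    · intro k _ hkj
      rw [if_neg (by tauto), twMul_zero_left]
    · simp
  · rw [Finset.sum_eq_zero]
    · simp [hai]
    · intro k _
      rw [if_neg (by tauto), twMul_zero_left]

lemma twMatMul_Estd (i j : Fin n) (e : Polynomial F)
    (A : Matrix (Fin n) (Fin n) (Polynomial F)) :
    twMatMul q A (Estd i j e) = Matrix.of fun a b => if b = j then twMul q (A a i) e else 0 := by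
  refine Matrix.ext fun a b => ?_
  rw [twMatMul_apply]
  show (∑ k, twMul q (A a k) (if k = i ∧ b = j then e else 0)) = _
  by_cases hbj : b = j
  · rw [Finset.sum_eq_single i]
    · simp [hbj]
    · intro k _ hki
      rw [if_neg (by tauto), twMul_zero_right]
    · simp
  · rw [Finset.sum_eq_zero]
    · simp [hbj]
    · intro k _
      rw [if_neg (by tauto), twMul_zero_right]

variable {p s : ℕ} [Fact p.Prime] [CharP F p]

lemma twMatMul_add (A B C : Matrix (Fin n) (Fin n) (Polynomial F)) :
    twMatMul (p ^ s) A (B + C) = twMatMul (p ^ s) A B + twMatMul (p ^ s) A C := by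
  refine Matrix.ext fun i k => ?_
  show (∑ j, twMul (p ^ s) (A i j) ((B + C) j k)) = _ + _
  simp only [Matrix.add_apply, twMul_add]
  rw [Finset.sum_add_distrib]
  rfl

lemma twMatMul_assoc (A B C : Matrix (Fin n) (Fin n) (Polynomial F)) :
    twMatMul (p ^ s) (twMatMul (p ^ s) A B) C = twMatMul (p ^ s) A (twMatMul (p ^ s) B C) := by
  refine Matrix.ext fun i l => ?_
  show (∑ k, twMul (p ^ s) (∑ j, twMul (p ^ s) (A i j) (B j k)) (C k l))
    = ∑ j, twMul (p ^ s) (A i j) (∑ k, twMul (p ^ s) (B j k) (C k l))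
  simp_rw [sum_twMul, twMul_sum, twMul_assoc]
  exact Finset.sum_comm

lemma map_twMatMul {F' : Type*} [Field F'] [CharP F' p] (φ : F →+* F')
    (A B : Matrix (Fin n) (Fin n) (Polynomial F)) :
    (twMatMul (p ^ s) A B).map (Polynomial.map φ)
      = twMatMul (p ^ s) (A.map (Polynomial.map φ)) (B.map (Polynomial.map φ)) := by
  refine Matrix.ext fun i k => ?_
  show Polynomial.map φ (∑ j, twMul (p ^ s) (A i j) (B j k)) = _
  rw [Polynomial.map_sum]
  exact Finset.sum_congr rfl fun j _ => map_twMul φ _ _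

end Mat

section Step

variable {F : Type*} [Field F] {p s : ℕ} [Fact p.Prime] [CharP F p] {n : ℕ}

lemma Estd_add (i j : Fin n) (x y : Polynomial F) :
    Estd i j x + Estd i j y = Estd i j (x + y) := by
  refine Matrix.ext fun a b => ?_
  show (if a = i ∧ b = j then x else 0) + (if a = i ∧ b = j then y else 0) = _
  by_cases h : a = i ∧ b = j <;> simp [Estd, h]

lemma Estd_zero (i j : Fin n) : Estd i j (0 : Polynomial F) = 0 := by
  refine Matrix.ext fun a b => ?_
  show (if a = i ∧ b = j then (0 : Polynomial F) else 0) = 0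
  simp

lemma Estd_twMatMul_Estd {q : ℕ} {i j : Fin n} (hij : j ≠ i) (x y : Polynomial F) :
    twMatMul q (Estd i j x) (Estd i j y) = 0 := by
  rw [Estd_twMatMul]
  refine Matrix.ext fun a b => ?_
  show (if a = i then twMul q x (Estd i j y j b) else 0) = 0
  have h0 : Estd i j y j b = 0 := by
    show (if j = i ∧ b = j then y else 0) = 0
    rw [if_neg (by tauto)]
  rw [h0, twMul_zero_right, ite_self]

lemma exists_conj_root [IsAlgClosed F] {q : ℕ} (hq1 : 1 < q) (r₀ : ℕ) (hr : 1 ≤ r₀)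
    (B A t : F) (hB : B ≠ 0) : ∃ c : F, t + c * A - B * c ^ q ^ r₀ = 0 := by
  have hN : 1 < q ^ r₀ := Nat.one_lt_pow (by omega) hq1
  set P : Polynomial F := Polynomial.C B * X ^ (q ^ r₀) - (Polynomial.C A * X + Polynomial.C t)
    with hP
  have hd1 : (Polynomial.C B * X ^ (q ^ r₀)).degree = ((q ^ r₀ : ℕ) : WithBot ℕ) :=
    Polynomial.degree_C_mul_X_pow _ hB
  have hd2 : (Polynomial.C A * X + Polynomial.C t).degree < ((q ^ r₀ : ℕ) : WithBot ℕ) := by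
    refine lt_of_le_of_lt (Polynomial.degree_add_le _ _) (max_lt ?_ ?_)
    · refine lt_of_le_of_lt (Polynomial.degree_C_mul_X_le _) ?_
      exact_mod_cast hN
    · refine lt_of_le_of_lt Polynomial.degree_C_le ?_
      exact_mod_cast Nat.lt_of_lt_of_le Nat.zero_lt_one (le_of_lt hN)
  have hdeg : P.degree = ((q ^ r₀ : ℕ) : WithBot ℕ) := by
    rw [hP, Polynomial.degree_sub_eq_left_of_degree_lt (by rw [hd1]; exact hd2), hd1]
  obtain ⟨c, hc⟩ := IsAlgClosed.exists_root P (by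
    rw [hdeg]
    exact_mod_cast (lt_trans Nat.zero_lt_one hN).ne')
  refine ⟨c, ?_⟩
  have hev : B * c ^ q ^ r₀ - (A * c + t) = 0 := by
    have := hc
    simp only [Polynomial.IsRoot, hP, Polynomial.eval_sub, Polynomial.eval_add,
      Polynomial.eval_mul, Polynomial.eval_pow, Polynomial.eval_C, Polynomial.eval_X] at this
    exact this
  linear_combination -hev

variable [IsAlgClosed F]

lemma step (hs : 0 < s) (r₀ ℓ : ℕ) (hr0 : 1 ≤ r₀)
    (Υ : Matrix (Fin n) (Fin n) (Polynomial F))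
    (hlow : ∀ a b : Fin n, a < b → Υ a b = 0)
    (hdiagdeg : ∀ k, (Υ k k).natDegree = r₀)
    (hdiaglead : ∀ k, (Υ k k).coeff r₀ ≠ 0)
    (i j : Fin n) (hij : (i : ℕ) = (j : ℕ) + (ℓ + 1))
    (hdeg : r₀ < (Υ i j).natDegree) :
    ∃ V W Υ' : Matrix (Fin n) (Fin n) (Polynomial F),
      (∀ a b : Fin n, a < b → V a b = 0) ∧ (∀ k, V k k = 1) ∧
      twMatMul (p ^ s) V W = 1 ∧ twMatMul (p ^ s) W V = 1 ∧
      Υ' = twMatMul (p ^ s) (twMatMul (p ^ s) V Υ) W ∧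
      (∀ a b : Fin n, a < b → Υ' a b = 0) ∧
      (∀ k, Υ' k k = Υ k k) ∧
      (∀ a b : Fin n, ¬(a = i ∧ b = j) → (a : ℕ) ≤ (b : ℕ) + (ℓ + 1) → Υ' a b = Υ a b) ∧
      (Υ' i j).natDegree < (Υ i j).natDegree := by
  have hp1 : 1 < p := (Fact.out (p := p.Prime)).one_lt
  have hq1 : 1 < p ^ s := Nat.one_lt_pow (by omega) hp1
  have hq0 : p ^ s ≠ 0 := by omega
  have hji : j < i := by
    rw [Fin.lt_def]; omega
  have hjine : j ≠ i := ne_of_lt hji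
  set D := (Υ i j).natDegree with hD
  set m := D - r₀ with hm
  have hm1 : 1 ≤ m := by omega
  have hmD : m ≤ D := by omega
  have hDm : D - m = r₀ := by omega
  obtain ⟨c, hc⟩ := exists_conj_root hq1 r₀ hr0 ((Υ i i).coeff r₀)
    (((Υ j j).coeff r₀) ^ (p ^ s) ^ m) ((Υ i j).coeff D) (hdiaglead i)
  set e : Polynomial F := monomial m c with he
  set V : Matrix (Fin n) (Fin n) (Polynomial F) := 1 + Estd i j e with hV
  set W : Matrix (Fin n) (Fin n) (Polynomial F) := 1 + Estd i j (-e) with hW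
  have hEE : ∀ x y : Polynomial F, twMatMul (p ^ s) (Estd i j x) (Estd i j y) = 0 :=
    fun x y => Estd_twMatMul_Estd hjine x y
  have hprod : ∀ x y : Polynomial F, x + y = 0 →
      twMatMul (p ^ s) (1 + Estd i j x) (1 + Estd i j y) = 1 := by
    intro x y hxy
    rw [twMatMul_add, add_twMatMul, add_twMatMul, twMatMul_one hq0, twMatMul_one hq0,
      one_twMatMul, hEE, add_zero, add_assoc, Estd_add, hxy, Estd_zero, add_zero]
  have hVW : twMatMul (p ^ s) V W = 1 := hprod e (-e) (by ring)
  have hWV : twMatMul (p ^ s) W V = 1 := hprod (-e) e (by ring)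
  -- expansion of the conjugation
  have hexp : twMatMul (p ^ s) (twMatMul (p ^ s) V Υ) W
      = Υ + (twMatMul (p ^ s) (Estd i j e) Υ + twMatMul (p ^ s) Υ (Estd i j (-e))) := by
    have hEUE : twMatMul (p ^ s) (twMatMul (p ^ s) (Estd i j e) Υ) (Estd i j (-e)) = 0 := by
      rw [Estd_twMatMul, twMatMul_Estd]
      refine Matrix.ext fun a b => ?_
      show (if b = j then twMul (p ^ s)
        ((Matrix.of fun a b => if a = i then twMul (p ^ s) e (Υ j b) else 0) a i) (-e) else 0) = 0
      have h0 : (Matrix.of fun a b => if a = i then twMul (p ^ s) e (Υ j b) else 0) a i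
          = 0 := by
        show (if a = i then twMul (p ^ s) e (Υ j i) else 0) = 0
        rw [hlow j i hji, twMul_zero_right, ite_self]
      rw [h0, twMul_zero_left, ite_self]
    rw [hV, hW, add_twMatMul, one_twMatMul, twMatMul_add, twMatMul_one hq0, add_twMatMul,
      hEUE, add_zero]
    abel
  set Υ' : Matrix (Fin n) (Fin n) (Polynomial F) := Matrix.of fun a b =>
    Υ a b + ((if a = i then twMul (p ^ s) e (Υ j b) else 0)
      + (if b = j then twMul (p ^ s) (Υ a i) (-e) else 0)) with hΥ'
  have hΥ'eq : Υ' = twMatMul (p ^ s) (twMatMul (p ^ s) V Υ) W := by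
    rw [hexp, Estd_twMatMul, twMatMul_Estd]
    rfl
  have hΥ'app : ∀ a b : Fin n, Υ' a b = Υ a b + ((if a = i then twMul (p ^ s) e (Υ j b) else 0)
      + (if b = j then twMul (p ^ s) (Υ a i) (-e) else 0)) := fun a b => rfl
  refine ⟨V, W, Υ', ?_, ?_, hVW, hWV, hΥ'eq, ?_, ?_, ?_, ?_⟩
  · -- V lower triangular
    intro a b hab
    show (1 : Matrix (Fin n) (Fin n) (Polynomial F)) a b + Estd i j e a b = 0
    rw [Matrix.one_apply_ne (ne_of_lt hab)]
    show 0 + (if a = i ∧ b = j then e else 0) = 0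
    rw [if_neg, add_zero]
    rintro ⟨rfl, rfl⟩
    exact absurd hab (not_lt_of_gt hji)
  · -- V diagonal 1
    intro k
    show (1 : Matrix (Fin n) (Fin n) (Polynomial F)) k k + Estd i j e k k = 1
    rw [Matrix.one_apply_eq]
    show 1 + (if k = i ∧ k = j then e else 0) = 1
    rw [if_neg, add_zero]
    rintro ⟨rfl, rfl⟩
    exact hjine rfl
  · -- Υ' lower triangular
    intro a b hab
    rw [hΥ'app, hlow a b hab]
    have h1 : (if a = i then twMul (p ^ s) e (Υ j b) else 0) = 0 := by
      by_cases hai : a = i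
      · rw [if_pos hai, hlow j b (lt_trans (hai ▸ hji) hab), twMul_zero_right]
      · rw [if_neg hai]
    have h2 : (if b = j then twMul (p ^ s) (Υ a i) (-e) else 0) = 0 := by
      by_cases hbj : b = j
      · rw [if_pos hbj, hlow a i (lt_trans hab (hbj ▸ hji)), twMul_zero_left]
      · rw [if_neg hbj]
    rw [h1, h2, add_zero, add_zero]
  · -- diagonal unchanged
    intro k
    rw [hΥ'app]
    have h1 : (if k = i then twMul (p ^ s) e (Υ j k) else 0) = 0 := by
      by_cases hk : k = i
      · rw [if_pos hk, hk, hlow j i hji, twMul_zero_right]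
      · rw [if_neg hk]
    have h2 : (if k = j then twMul (p ^ s) (Υ k i) (-e) else 0) = 0 := by
      by_cases hk : k = j
      · rw [if_pos hk, hk, hlow j i hji, twMul_zero_left]
      · rw [if_neg hk]
    rw [h1, h2, add_zero, add_zero]
  · -- nearby entries unchanged
    intro a b hne hband
    rw [hΥ'app]
    have h1 : (if a = i then twMul (p ^ s) e (Υ j b) else 0) = 0 := by
      by_cases hai : a = i
      · rw [if_pos hai]
        have hbj : b ≠ j := fun hbj => hne ⟨hai, hbj⟩
        have : j < b := by
          rw [Fin.lt_def]
          have : (a : ℕ) = (j : ℕ) + (ℓ + 1) := by rw [hai]; exact hij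
          have hne2 : (b : ℕ) ≠ (j : ℕ) := fun h => hbj (Fin.ext h)
          omega
        rw [hlow j b this, twMul_zero_right]
      · rw [if_neg hai]
    have h2 : (if b = j then twMul (p ^ s) (Υ a i) (-e) else 0) = 0 := by
      by_cases hbj : b = j
      · rw [if_pos hbj]
        have hai : a ≠ i := fun hai => hne ⟨hai, hbj⟩
        have : a < i := by
          rw [Fin.lt_def]
          have : (b : ℕ) = (j : ℕ) := by rw [hbj]
          have hne2 : (a : ℕ) ≠ (i : ℕ) := fun h => hai (Fin.ext h)
          omega
        rw [hlow a i this, twMul_zero_left]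
      · rw [if_neg hbj]
    rw [h1, h2, add_zero, add_zero]
  · -- degree drop at (i, j)
    have hentry : Υ' i j = Υ i j + (twMul (p ^ s) e (Υ j j)
        + -(twMul (p ^ s) (Υ i i) e)) := by
      rw [hΥ'app, if_pos rfl, if_pos rfl, twMul_neg]
    have hcoeff : ∀ k : ℕ, D ≤ k → (Υ' i j).coeff k = 0 := by
      intro k hk
      have hmk : m ≤ k := le_trans hmD hk
      rw [hentry, Polynomial.coeff_add, Polynomial.coeff_add, Polynomial.coeff_neg, he,
        coeff_twMul_monomial_left hq0, coeff_twMul_monomial_right hq0, if_pos hmk, if_pos hmk]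
      rcases Nat.eq_or_lt_of_le hk with heq | hlt
      · have hkD : k = D := heq.symm
        subst hkD
        rw [hDm]
        linear_combination hc
      · have h1 : (Υ i j).coeff k = 0 :=
          Polynomial.coeff_eq_zero_of_natDegree_lt (by omega)
        have hr2 : r₀ < k - m := by omega
        have h2 : (Υ j j).coeff (k - m) = 0 :=
          Polynomial.coeff_eq_zero_of_natDegree_lt (by rw [hdiagdeg j]; exact hr2)
        have h3 : (Υ i i).coeff (k - m) = 0 :=
          Polynomial.coeff_eq_zero_of_natDegree_lt (by rw [hdiagdeg i]; exact hr2)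
        rw [h1, h2, h3, zero_pow (pow_ne_zero m hq0), mul_zero, zero_mul]
        ring
    by_cases h0 : Υ' i j = 0
    · rw [h0, Polynomial.natDegree_zero]
      omega
    · rw [Polynomial.natDegree_lt_iff_degree_lt h0, Polynomial.degree_lt_iff_coeff_zero]
      intro k hk
      exact hcoeff k (by exact_mod_cast hk)

end Step

section Reduce

variable {F : Type*} [Field F] {p s : ℕ} [Fact p.Prime] [CharP F p] {n : ℕ}

lemma unitri_comp {q : ℕ} (hq0 : q ≠ 0) (V₂ V₁ : Matrix (Fin n) (Fin n) (Polynomial F))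
    (h₂low : ∀ a b : Fin n, a < b → V₂ a b = 0) (h₂diag : ∀ k, V₂ k k = 1)
    (h₁low : ∀ a b : Fin n, a < b → V₁ a b = 0) (h₁diag : ∀ k, V₁ k k = 1) :
    (∀ a b : Fin n, a < b → twMatMul q V₂ V₁ a b = 0) ∧
      (∀ k, twMatMul q V₂ V₁ k k = 1) := by
  constructor
  · intro a b hab
    rw [twMatMul_apply, Finset.sum_eq_zero]
    intro k _
    rcases lt_or_ge a k with h | h
    · rw [h₂low a k h, twMul_zero_left]
    · rw [h₁low k b (lt_of_le_of_lt h hab), twMul_zero_right]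
  · intro k
    rw [twMatMul_apply, Finset.sum_eq_single k]
    · rw [h₂diag k, h₁diag k, one_twMul]
    · intro b _ hbk
      rcases lt_or_ge k b with h | h
      · rw [h₂low k b h, twMul_zero_left]
      · rw [h₁low b k (lt_of_le_of_ne h hbk), twMul_zero_right]
    · simp

lemma conj_comp (q : ℕ) [Fact p.Prime]
    (V₁ W₁ V₂ W₂ Υ Υ₁ Υ₂ : Matrix (Fin n) (Fin n) (Polynomial F))
    (hq : q = p ^ s)
    (h₁ : Υ₁ = twMatMul q (twMatMul q V₁ Υ) W₁)
    (h₂ : Υ₂ = twMatMul q (twMatMul q V₂ Υ₁) W₂) :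
    Υ₂ = twMatMul q (twMatMul q (twMatMul q V₂ V₁) Υ) (twMatMul q W₁ W₂) := by
  subst hq
  rw [h₂]
  calc twMatMul (p ^ s) (twMatMul (p ^ s) V₂ Υ₁) W₂
      = twMatMul (p ^ s) V₂ (twMatMul (p ^ s) Υ₁ W₂) := twMatMul_assoc _ _ _
    _ = twMatMul (p ^ s) V₂ (twMatMul (p ^ s)
          (twMatMul (p ^ s) (twMatMul (p ^ s) V₁ Υ) W₁) W₂) := by rw [← h₁]
    _ = twMatMul (p ^ s) V₂ (twMatMul (p ^ s) (twMatMul (p ^ s) V₁ Υ)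
          (twMatMul (p ^ s) W₁ W₂)) := by rw [twMatMul_assoc]
    _ = twMatMul (p ^ s) (twMatMul (p ^ s) V₂ (twMatMul (p ^ s) V₁ Υ))
          (twMatMul (p ^ s) W₁ W₂) := (twMatMul_assoc _ _ _).symm
    _ = twMatMul (p ^ s) (twMatMul (p ^ s) (twMatMul (p ^ s) V₂ V₁) Υ)
          (twMatMul (p ^ s) W₁ W₂) := by rw [twMatMul_assoc V₂ V₁ Υ]

variable [IsAlgClosed F]

lemma band (hs : 0 < s) (r₀ : ℕ) (hr0 : 1 ≤ r₀) (ℓ : ℕ) (N : ℕ) :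
    ∀ Υ : Matrix (Fin n) (Fin n) (Polynomial F),
      (∑ ab ∈ Finset.univ.filter (fun ab : Fin n × Fin n => (ab.1 : ℕ) = (ab.2 : ℕ) + (ℓ + 1)),
        ((Υ ab.1 ab.2).natDegree - r₀)) ≤ N →
      (∀ a b : Fin n, a < b → Υ a b = 0) →
      (∀ k, (Υ k k).natDegree = r₀) →
      (∀ k, (Υ k k).coeff r₀ ≠ 0) →
      (∀ a b : Fin n, (a : ℕ) ≤ (b : ℕ) + ℓ → (Υ a b).natDegree ≤ r₀) →
      ∃ V W Υ' : Matrix (Fin n) (Fin n) (Polynomial F),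
        (∀ a b : Fin n, a < b → V a b = 0) ∧ (∀ k, V k k = 1) ∧
        twMatMul (p ^ s) V W = 1 ∧ twMatMul (p ^ s) W V = 1 ∧
        Υ' = twMatMul (p ^ s) (twMatMul (p ^ s) V Υ) W ∧
        (∀ a b : Fin n, a < b → Υ' a b = 0) ∧
        (∀ k, Υ' k k = Υ k k) ∧
        (∀ a b : Fin n, (a : ℕ) ≤ (b : ℕ) + (ℓ + 1) → (Υ' a b).natDegree ≤ r₀) := by
  have hp1 : 1 < p := (Fact.out (p := p.Prime)).one_lt
  have hq0 : p ^ s ≠ 0 := pow_ne_zero s (by omega)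
  induction N using Nat.strong_induction_on with
  | _ N ih =>
    intro Υ hN hlow hdd hdl hclean
    by_cases hz : (∑ ab ∈ Finset.univ.filter
        (fun ab : Fin n × Fin n => (ab.1 : ℕ) = (ab.2 : ℕ) + (ℓ + 1)),
        ((Υ ab.1 ab.2).natDegree - r₀)) = 0
    · refine ⟨1, 1, Υ, ?_, ?_, ?_, ?_, ?_, hlow, fun k => rfl, ?_⟩
      · intro a b hab
        exact Matrix.one_apply_ne (ne_of_lt hab)
      · intro k
        exact Matrix.one_apply_eq k
      · exact twMatMul_one hq0 1
      · exact twMatMul_one hq0 1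
      · rw [one_twMatMul, twMatMul_one hq0]
      · intro a b hband
        rcases Nat.lt_or_ge ((a : ℕ)) ((b : ℕ) + (ℓ + 1)) with h | h
        · exact hclean a b (by omega)
        · have hmem : (a, b) ∈ Finset.univ.filter
              (fun ab : Fin n × Fin n => (ab.1 : ℕ) = (ab.2 : ℕ) + (ℓ + 1)) := by
            simp only [Finset.mem_filter, Finset.mem_univ, true_and]
            omega
          have h2 : (Υ a b).natDegree - r₀ = 0 := Finset.sum_eq_zero_iff.mp hz (a, b) hmem
          omega
    · obtain ⟨ab, habmem, habne⟩ := Finset.exists_ne_zero_of_sum_ne_zero hz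
      have habf : (ab.1 : ℕ) = (ab.2 : ℕ) + (ℓ + 1) :=
        (Finset.mem_filter.mp habmem).2
      have hdeg : r₀ < (Υ ab.1 ab.2).natDegree := by omega
      obtain ⟨V₁, W₁, Υ₁, hV₁low, hV₁diag, hV₁W₁, hW₁V₁, hΥ₁eq, hΥ₁low, hΥ₁diag,
        hΥ₁unch, hΥ₁drop⟩ := step (p := p) hs r₀ ℓ hr0 Υ hlow hdd hdl ab.1 ab.2 habf hdeg
      have hdd₁ : ∀ k, (Υ₁ k k).natDegree = r₀ := fun k => by rw [hΥ₁diag k]; exact hdd k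
      have hdl₁ : ∀ k, (Υ₁ k k).coeff r₀ ≠ 0 := fun k => by rw [hΥ₁diag k]; exact hdl k
      have hclean₁ : ∀ a b : Fin n, (a : ℕ) ≤ (b : ℕ) + ℓ → (Υ₁ a b).natDegree ≤ r₀ := by
        intro a b hband
        have hne : ¬(a = ab.1 ∧ b = ab.2) := by
          rintro ⟨rfl, rfl⟩
          omega
        rw [hΥ₁unch a b hne (by omega)]
        exact hclean a b hband
      have hsum₁ : (∑ x ∈ Finset.univ.filter
          (fun x : Fin n × Fin n => (x.1 : ℕ) = (x.2 : ℕ) + (ℓ + 1)),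
          ((Υ₁ x.1 x.2).natDegree - r₀)) < (∑ x ∈ Finset.univ.filter
          (fun x : Fin n × Fin n => (x.1 : ℕ) = (x.2 : ℕ) + (ℓ + 1)),
          ((Υ x.1 x.2).natDegree - r₀)) := by
        refine Finset.sum_lt_sum ?_ ⟨ab, habmem, ?_⟩
        · intro x hx
          by_cases hxab : x = ab
          · subst hxab
            have := hΥ₁drop
            omega
          · have hxf : (x.1 : ℕ) = (x.2 : ℕ) + (ℓ + 1) := (Finset.mem_filter.mp hx).2
            have hne : ¬(x.1 = ab.1 ∧ x.2 = ab.2) := by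
              rintro ⟨h1, h2⟩
              exact hxab (Prod.ext h1 h2)
            rw [hΥ₁unch x.1 x.2 hne (by omega)]
        · have := hΥ₁drop
          omega
      have hN₁ : (∑ x ∈ Finset.univ.filter
          (fun x : Fin n × Fin n => (x.1 : ℕ) = (x.2 : ℕ) + (ℓ + 1)),
          ((Υ₁ x.1 x.2).natDegree - r₀)) < N := lt_of_lt_of_le hsum₁ hN
      obtain ⟨V₂, W₂, Υ₂, hV₂low, hV₂diag, hV₂W₂, hW₂V₂, hΥ₂eq, hΥ₂low, hΥ₂diag, hΥ₂clean⟩ :=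
        ih _ hN₁ Υ₁ le_rfl hΥ₁low hdd₁ hdl₁ hclean₁
      obtain ⟨hVlow, hVdiag⟩ := unitri_comp hq0 V₂ V₁ hV₂low hV₂diag hV₁low hV₁diag
      refine ⟨twMatMul (p ^ s) V₂ V₁, twMatMul (p ^ s) W₁ W₂, Υ₂, hVlow, hVdiag, ?_, ?_,
        conj_comp (p ^ s) V₁ W₁ V₂ W₂ Υ Υ₁ Υ₂ rfl hΥ₁eq hΥ₂eq, hΥ₂low,
        fun k => by rw [hΥ₂diag k, hΥ₁diag k], hΥ₂clean⟩
      · rw [twMatMul_assoc, ← twMatMul_assoc V₁ W₁ W₂, hV₁W₁, one_twMatMul, hV₂W₂]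
      · rw [twMatMul_assoc, ← twMatMul_assoc W₂ V₂ V₁, hW₂V₂, one_twMatMul, hW₁V₁]

lemma outer (hs : 0 < s) (r₀ : ℕ) (hr0 : 1 ≤ r₀) (ℓ : ℕ) :
    ∀ Υ : Matrix (Fin n) (Fin n) (Polynomial F),
      (∀ a b : Fin n, a < b → Υ a b = 0) →
      (∀ k, (Υ k k).natDegree = r₀) →
      (∀ k, (Υ k k).coeff r₀ ≠ 0) →
      ∃ V W Υ' : Matrix (Fin n) (Fin n) (Polynomial F),
        (∀ a b : Fin n, a < b → V a b = 0) ∧ (∀ k, V k k = 1) ∧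
        twMatMul (p ^ s) V W = 1 ∧ twMatMul (p ^ s) W V = 1 ∧
        Υ' = twMatMul (p ^ s) (twMatMul (p ^ s) V Υ) W ∧
        (∀ a b : Fin n, a < b → Υ' a b = 0) ∧
        (∀ k, Υ' k k = Υ k k) ∧
        (∀ a b : Fin n, (a : ℕ) ≤ (b : ℕ) + ℓ → (Υ' a b).natDegree ≤ r₀) := by
  have hp1 : 1 < p := (Fact.out (p := p.Prime)).one_lt
  have hq0 : p ^ s ≠ 0 := pow_ne_zero s (by omega)
  induction ℓ with
  | zero =>
    intro Υ hlow hdd hdl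
    refine ⟨1, 1, Υ, ?_, ?_, twMatMul_one hq0 1, twMatMul_one hq0 1, ?_, hlow,
      fun k => rfl, ?_⟩
    · intro a b hab
      exact Matrix.one_apply_ne (ne_of_lt hab)
    · intro k
      exact Matrix.one_apply_eq k
    · rw [one_twMatMul, twMatMul_one hq0]
    · intro a b hband
      rcases Nat.lt_or_ge ((a : ℕ)) ((b : ℕ)) with h | h
      · rw [hlow a b (by rwa [Fin.lt_def])]
        simp
      · have : a = b := Fin.ext (by omega)
        subst this
        rw [hdd a]
  | succ ℓ ihℓ =>
    intro Υ hlow hdd hdl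
    obtain ⟨V₁, W₁, Υ₁, hV₁low, hV₁diag, hV₁W₁, hW₁V₁, hΥ₁eq, hΥ₁low, hΥ₁diag, hΥ₁clean⟩ :=
      ihℓ Υ hlow hdd hdl
    have hdd₁ : ∀ k, (Υ₁ k k).natDegree = r₀ := fun k => by rw [hΥ₁diag k]; exact hdd k
    have hdl₁ : ∀ k, (Υ₁ k k).coeff r₀ ≠ 0 := fun k => by rw [hΥ₁diag k]; exact hdl k
    obtain ⟨V₂, W₂, Υ₂, hV₂low, hV₂diag, hV₂W₂, hW₂V₂, hΥ₂eq, hΥ₂low, hΥ₂diag, hΥ₂clean⟩ :=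
      band (p := p) hs r₀ hr0 ℓ (∑ ab ∈ Finset.univ.filter
          (fun ab : Fin n × Fin n => (ab.1 : ℕ) = (ab.2 : ℕ) + (ℓ + 1)),
          ((Υ₁ ab.1 ab.2).natDegree - r₀)) Υ₁ le_rfl hΥ₁low hdd₁ hdl₁ hΥ₁clean
    obtain ⟨hVlow, hVdiag⟩ := unitri_comp hq0 V₂ V₁ hV₂low hV₂diag hV₁low hV₁diag
    refine ⟨twMatMul (p ^ s) V₂ V₁, twMatMul (p ^ s) W₁ W₂, Υ₂, hVlow, hVdiag, ?_, ?_,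
      conj_comp (p ^ s) V₁ W₁ V₂ W₂ Υ Υ₁ Υ₂ rfl hΥ₁eq hΥ₂eq, hΥ₂low,
      fun k => by rw [hΥ₂diag k, hΥ₁diag k], hΥ₂clean⟩
    · rw [twMatMul_assoc, ← twMatMul_assoc V₁ W₁ W₂, hV₁W₁, one_twMatMul, hV₂W₂]
    · rw [twMatMul_assoc, ← twMatMul_assoc W₂ V₂ V₁, hW₂V₂, one_twMatMul, hW₁V₁]

lemma core (hs : 0 < s) (r₀ : ℕ) (hr0 : 1 ≤ r₀)
    (Υ : Matrix (Fin n) (Fin n) (Polynomial F))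
    (hlow : ∀ a b : Fin n, a < b → Υ a b = 0)
    (hdd : ∀ k, (Υ k k).natDegree = r₀)
    (hdl : ∀ k, (Υ k k).coeff r₀ ≠ 0) :
    ∃ V W Υ' : Matrix (Fin n) (Fin n) (Polynomial F),
      (∀ a b : Fin n, a < b → V a b = 0) ∧ (∀ k, V k k = 1) ∧
      twMatMul (p ^ s) V W = 1 ∧ twMatMul (p ^ s) W V = 1 ∧
      Υ' = twMatMul (p ^ s) (twMatMul (p ^ s) V Υ) W ∧
      (∀ a b : Fin n, a < b → Υ' a b = 0) ∧
      (∀ k, Υ' k k = Υ k k) ∧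
      (∀ a b : Fin n, (Υ' a b).natDegree ≤ r₀) := by
  obtain ⟨V, W, Υ', h1, h2, h3, h4, h5, h6, h7, h8⟩ := outer (p := p) hs r₀ hr0 n Υ hlow hdd hdl
  exact ⟨V, W, Υ', h1, h2, h3, h4, h5, h6, h7, fun a b => h8 a b (by omega)⟩

end Reduce

section Descent

variable {K : Type*} [Field K] {Ω : Type*} [Field Ω] [Algebra K Ω]

def polyLift (L : IntermediateField K Ω) (P : Polynomial Ω) (h : ∀ k, P.coeff k ∈ L) :
    Polynomial L :=
  ∑ k ∈ P.support, monomial k (⟨P.coeff k, h k⟩ : L)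

lemma polyLift_map (L : IntermediateField K Ω) (P : Polynomial Ω) (h : ∀ k, P.coeff k ∈ L) :
    (polyLift L P h).map (algebraMap L Ω) = P := by
  rw [polyLift, Polynomial.map_sum]
  simp only [Polynomial.map_monomial]
  have hco : ∀ k, algebraMap L Ω (⟨P.coeff k, h k⟩ : L) = P.coeff k := fun k => rfl
  simp_rw [hco]
  exact P.as_sum_support.symm

end Descent

/-- an almost strictly pure triangular t-module becomes strictly pure
after a finite base extension.  If all diagonal Drinfeld modules of `Υ` have the same
rank `r₀`, then there exist a finite field extension `L/K` and a lower triangular matrix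
`V` over `L{τ}` with diagonal entries `1` (with two-sided twisted inverse `W`) such that
`V·Υ_t·V⁻¹` is lower triangular with the same diagonal entries, has `τ`-degree `r₀`, and
its leading coefficient matrix (the entrywise matrix of coefficients of `τ^{r₀}`) is
invertible; i.e. `Υ` becomes isomorphic over `L` to a strictly pure t-module. -/
theorem almost_strictly_pure_becomes_strictly_pure
    {K : Type*} [Field K] (p s q : ℕ) [Fact p.Prime] (hs : 0 < s) (hq : q = p ^ s)
    [Algebra (GaloisField p s) K] (θ : K) {n : ℕ} (hn : 0 < n)
    (Υ : Matrix (Fin n) (Fin n) (Polynomial K))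
    (ψ : Fin n → Polynomial K) (r : Fin n → ℕ)
    (hΥ : IsTriangular θ Υ ψ r)
    (r₀ : ℕ) (hr : ∀ i : Fin n, r i = r₀) :
    ∃ L : IntermediateField K (AlgebraicClosure K), FiniteDimensional K L ∧
      ∃ V W : Matrix (Fin n) (Fin n) (Polynomial L),
        (∀ i j : Fin n, i < j → V i j = 0) ∧
        (∀ k : Fin n, V k k = 1) ∧
        twMatMul q V W = 1 ∧ twMatMul q W V = 1 ∧
        ∃ Υ' : Matrix (Fin n) (Fin n) (Polynomial L),
          Υ' = twMatMul q (twMatMul q V (Υ.map (Polynomial.map (algebraMap K L)))) W ∧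
          (∀ i j : Fin n, i < j → Υ' i j = 0) ∧
          (∀ k : Fin n, Υ' k k = (ψ k.rev).map (algebraMap K L)) ∧
          (Finset.univ.sup fun ab : Fin n × Fin n => (Υ' ab.1 ab.2).natDegree) = r₀ ∧
          IsUnit (Matrix.of fun a b : Fin n => (Υ' a b).coeff r₀) := by
  classical
  subst hq
  obtain ⟨hlowK, hdiagK, hdrin⟩ := hΥ
  haveI hKp : CharP K p :=
    charP_of_injective_algebraMap (algebraMap (GaloisField p s) K).injective p
  set Ω := AlgebraicClosure K with hΩ
  haveI hΩp : CharP Ω p := charP_of_injective_algebraMap (algebraMap K Ω).injective p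
  have hr0 : 1 ≤ r₀ := by
    have h1 := (hdrin ⟨0, hn⟩).1
    rwa [hr ⟨0, hn⟩] at h1
  set φKΩ := algebraMap K Ω with hφ
  set ΥΩ : Matrix (Fin n) (Fin n) (Polynomial Ω) := Υ.map (Polynomial.map φKΩ) with hΥΩ
  have hΥΩapp : ∀ a b : Fin n, ΥΩ a b = (Υ a b).map φKΩ := fun a b => rfl
  have hlowΩ : ∀ a b : Fin n, a < b → ΥΩ a b = 0 := by
    intro a b hab
    rw [hΥΩapp, hlowK a b hab, Polynomial.map_zero]
  have hdiagΩ : ∀ k : Fin n, ΥΩ k k = (ψ k.rev).map φKΩ := fun k => by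
    rw [hΥΩapp, hdiagK k]
  have hψdeg : ∀ k : Fin n, (ψ k).natDegree = r₀ := fun k => by
    have h1 := (hdrin k).2.2.1
    rwa [hr k] at h1
  have hψlead : ∀ k : Fin n, (ψ k).coeff r₀ ≠ 0 := fun k => by
    have h1 := (hdrin k).2.2.2
    rwa [hr k] at h1
  have hdd : ∀ k, (ΥΩ k k).natDegree = r₀ := by
    intro k
    rw [hdiagΩ k, Polynomial.natDegree_map, hψdeg]
  have hdl : ∀ k, (ΥΩ k k).coeff r₀ ≠ 0 := by
    intro k
    rw [hdiagΩ k, Polynomial.coeff_map]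
    exact (map_ne_zero_iff _ (algebraMap K Ω).injective).mpr (hψlead k.rev)
  obtain ⟨V, W, Υ', hVlow, hVdiag, hVW, hWV, hΥ'eq, hΥ'low, hΥ'diag, hΥ'deg⟩ :=
    core (p := p) hs r₀ hr0 ΥΩ hlowΩ hdd hdl
  set T : Finset Ω := Finset.univ.biUnion (fun ab : Fin n × Fin n =>
    (V ab.1 ab.2).coeffs ∪ (W ab.1 ab.2).coeffs ∪ (Υ' ab.1 ab.2).coeffs) with hT
  set L := IntermediateField.adjoin K (↑T : Set Ω) with hL
  haveI hfd : FiniteDimensional K L := IntermediateField.finiteDimensional_adjoin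
    (fun x _ => (Algebra.IsAlgebraic.isAlgebraic (R := K) x).isIntegral)
  have hmem : ∀ P : Polynomial Ω, (∃ ab : Fin n × Fin n,
      P = V ab.1 ab.2 ∨ P = W ab.1 ab.2 ∨ P = Υ' ab.1 ab.2) → ∀ k, P.coeff k ∈ L := by
    intro P hP k
    by_cases h0 : P.coeff k = 0
    · rw [h0]; exact zero_mem _
    · apply IntermediateField.subset_adjoin
      obtain ⟨ab, hab⟩ := hP
      refine Finset.mem_coe.mpr (Finset.mem_biUnion.mpr ⟨ab, Finset.mem_univ ab, ?_⟩)
      rcases hab with h | h | h <;> subst h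
      · exact Finset.mem_union_left _ (Finset.mem_union_left _ (Polynomial.coeff_mem_coeffs h0))
      · exact Finset.mem_union_left _ (Finset.mem_union_right _ (Polynomial.coeff_mem_coeffs h0))
      · exact Finset.mem_union_right _ (Polynomial.coeff_mem_coeffs h0)
  set VL : Matrix (Fin n) (Fin n) (Polynomial L) := Matrix.of fun a b =>
    polyLift L (V a b) (hmem _ ⟨(a, b), Or.inl rfl⟩) with hVL
  set WL : Matrix (Fin n) (Fin n) (Polynomial L) := Matrix.of fun a b =>
    polyLift L (W a b) (hmem _ ⟨(a, b), Or.inr (Or.inl rfl)⟩) with hWL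
  set UL : Matrix (Fin n) (Fin n) (Polynomial L) := Matrix.of fun a b =>
    polyLift L (Υ' a b) (hmem _ ⟨(a, b), Or.inr (Or.inr rfl)⟩) with hUL
  have hVLmap : VL.map (Polynomial.map (algebraMap L Ω)) = V :=
    Matrix.ext fun a b => polyLift_map _ _ _
  have hWLmap : WL.map (Polynomial.map (algebraMap L Ω)) = W :=
    Matrix.ext fun a b => polyLift_map _ _ _
  have hULmap : UL.map (Polynomial.map (algebraMap L Ω)) = Υ' :=
    Matrix.ext fun a b => polyLift_map _ _ _
  haveI hLp : CharP L p := charP_of_injective_algebraMap (algebraMap K L).injective p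
  have hinj : Function.Injective (algebraMap L Ω) := (algebraMap (↥L) Ω).injective
  have hpinj : Function.Injective (Polynomial.map (algebraMap L Ω)) :=
    fun f g h => Polynomial.map_injective _ hinj h
  have hMinj : ∀ M N : Matrix (Fin n) (Fin n) (Polynomial L),
      M.map (Polynomial.map (algebraMap L Ω)) = N.map (Polynomial.map (algebraMap L Ω)) →
      M = N := by
    intro M N h
    refine Matrix.ext fun a b => hpinj ?_
    have h2 := congrArg (fun X => X a b) h
    simpa [Matrix.map_apply] using h2
  have honemap : (1 : Matrix (Fin n) (Fin n) (Polynomial L)).map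
      (Polynomial.map (algebraMap L Ω)) = 1 := by
    refine Matrix.ext fun a b => ?_
    rw [Matrix.map_apply]
    by_cases hab : a = b
    · subst hab
      rw [Matrix.one_apply_eq, Matrix.one_apply_eq, Polynomial.map_one]
    · rw [Matrix.one_apply_ne hab, Matrix.one_apply_ne hab, Polynomial.map_zero]
  have hKLΩ : ∀ P : Polynomial K,
      (P.map (algebraMap K L)).map (algebraMap L Ω) = P.map φKΩ := by
    intro P
    rw [Polynomial.map_map, ← IsScalarTower.algebraMap_eq]
  have hULlow : ∀ i j : Fin n, i < j → UL i j = 0 := by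
    intro i j hij
    apply hpinj
    rw [Polynomial.map_zero]
    exact (polyLift_map _ _ _).trans (hΥ'low i j hij)
  have hULdiag : ∀ k : Fin n, UL k k = (ψ k.rev).map (algebraMap K L) := by
    intro k
    apply hpinj
    rw [hKLΩ]
    exact (polyLift_map _ _ _).trans (by rw [hΥ'diag k, hdiagΩ k])
  have hdegL : ∀ a b : Fin n, (UL a b).natDegree = (Υ' a b).natDegree := by
    intro a b
    have h2 : Υ' a b = (UL a b).map (algebraMap L Ω) := (polyLift_map _ _ _).symm
    rw [h2, Polynomial.natDegree_map]
  refine ⟨L, hfd, VL, WL, ?_, ?_, ?_, ?_, UL, ?_, hULlow, hULdiag, ?_, ?_⟩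
  · intro i j hij
    apply hpinj
    rw [Polynomial.map_zero]
    exact (polyLift_map _ _ _).trans (hVlow i j hij)
  · intro k
    apply hpinj
    rw [Polynomial.map_one]
    exact (polyLift_map _ _ _).trans (hVdiag k)
  · apply hMinj
    rw [map_twMatMul (p := p) (s := s), hVLmap, hWLmap, hVW, honemap]
  · apply hMinj
    rw [map_twMatMul (p := p) (s := s), hVLmap, hWLmap, hWV, honemap]
  · apply hMinj
    rw [map_twMatMul (p := p) (s := s), map_twMatMul (p := p) (s := s), hVLmap, hWLmap, hULmap]
    have h2 : (Υ.map (Polynomial.map (algebraMap K L))).map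
        (Polynomial.map (algebraMap L Ω)) = ΥΩ := by
      refine Matrix.ext fun a b => ?_
      rw [Matrix.map_apply, Matrix.map_apply, hKLΩ]
      rfl
    rw [h2]
    exact hΥ'eq
  · apply le_antisymm
    · refine Finset.sup_le fun ab _ => ?_
      rw [hdegL]
      exact hΥ'deg ab.1 ab.2
    · have hle := Finset.le_sup (f := fun ab : Fin n × Fin n => (UL ab.1 ab.2).natDegree)
        (Finset.mem_univ (⟨0, hn⟩, ⟨0, hn⟩))
      have heq : (UL (⟨0, hn⟩ : Fin n) (⟨0, hn⟩ : Fin n)).natDegree = r₀ := by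
        rw [hdegL, hΥ'diag]
        exact hdd _
      rw [← heq]
      exact hle
  · rw [Matrix.isUnit_iff_isUnit_det]
    have hdet := Matrix.det_of_lowerTriangular
      (Matrix.of fun a b : Fin n => (UL a b).coeff r₀)
      (by
        intro i j hij
        show (UL i j).coeff r₀ = 0
        rw [hULlow i j (by simpa using hij), Polynomial.coeff_zero])
    rw [hdet]
    refine isUnit_iff_ne_zero.mpr (Finset.prod_ne_zero_iff.mpr fun k _ => ?_)
    show (UL k k).coeff r₀ ≠ 0
    rw [hULdiag k, Polynomial.coeff_map]
    exact (map_ne_zero_iff _ (algebraMap K L).injective).mpr (hψlead k.rev)
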